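/- Let A be a parity automaton with costs, and let (ρ_j^1)_{j∈ℕ} and (ρ_j^2)_{j∈ℕ} be sequences of non-empty finite runs of A such that for every j the runs ρ_j^1 and ρ_j^2 have the same type, the last state of ρ_j^i equals the first state of ρ_{j+1}^i for every j and i ∈ {1,2} (so the concatenations ρ' = ρ_0^1 ρ_1^1 ρ_2^1 ⋯ and ρ'' = ρ_0^2 ρ_1^2 ρ_2^2 ⋯ are infinite runs of A), and sup_j |ρ_j^2| = d < ∞. If limsup_{n→∞} Cor(ρ', n) ≤ b for some b ∈ ℕ, then limsup_{n→∞} Cor(ρ'', n) ≤ (b+2)·d; in particular, if ρ' is an accepting run, then ρ'' is an accepting run as well. -/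

import Mathlib

attribute [local instance] Classical.propDecidable

noncomputable section

/-- A parity automaton with costs `(Q, A, qI, δ, Ω, Cst)`.
`Cst q a = true` means that the transition `(q, a, δ q a)` is an increment-transition,
`Cst q a = false` means it is an `ε`-transition. -/
structure PACost (Q : Type) (A : Type) where
  qI : Q
  δ : Q → A → Q
  Ω : Q → ℕ
  Cst : Q → A → Bool

namespace PACost

variable {Q A : Type}

/-- The state reached after processing the first `n` letters of `w` starting in `q0`. -/
def stateAt (M : PACost Q A) (q0 : Q) (w : ℕ → A) : ℕ → Q
  | 0 => q0
  | n + 1 => M.δ (stateAt M q0 w n) (w n)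

/-- The cost (number of increment-transitions) of the run infix between positions `m` and `n`. -/
def segCost (M : PACost Q A) (q0 : Q) (w : ℕ → A) (m n : ℕ) : ℕ :=
  ((Finset.Ico m n).filter fun j => M.Cst (stateAt M q0 w j) (w j) = true).card

/-- `Ans c`: the set of even colors of `M` that are larger than `c`. -/
def Ans (M : PACost Q A) (c : ℕ) : Set ℕ :=
  { c' | (∃ q, M.Ω q = c') ∧ c < c' ∧ Even c' }

/-- The cost-of-response at position `n` of the run of `M` on `w` starting in `q0`. -/
def Cor (M : PACost Q A) (q0 : Q) (w : ℕ → A) (n : ℕ) : ℕ∞ :=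
  if Even (M.Ω (stateAt M q0 w n)) then 0
  else
    sInf { c : ℕ∞ | ∃ n', n < n' ∧
      M.Ω (stateAt M q0 w n') ∈ M.Ans (M.Ω (stateAt M q0 w n)) ∧
      c = (segCost M q0 w n n' : ℕ∞) }

/-- The run of `M` on `w` starting in `q0` satisfies the parity condition with costs. -/
def Accepting (M : PACost Q A) (q0 : Q) (w : ℕ → A) : Prop :=
  Filter.limsup (fun n => Cor M q0 w n) Filter.atTop < ⊤

/-- The language of `M`. -/
def Lang (M : PACost Q A) : Set (ℕ → A) := { w | Accepting M M.qI w }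

/-- `M` is a finitary Büchi automaton: every transition is an increment-transition and
all colors are `1` or `2`. -/
def FinBuchi (M : PACost Q A) : Prop :=
  (∀ q a, M.Cst q a = true) ∧ ∀ q, M.Ω q = 1 ∨ M.Ω q = 2

end PACost

/-- The finite segment `w m, w (m+1), …, w (n-1)` of an infinite word `w`. -/
def seg {A : Type} (w : ℕ → A) (m n : ℕ) : List A :=
  (List.range (n - m)).map fun i => w (m + i)

namespace PACost

/-- Types of runs: `(first state, last state, max even color, max unanswered odd color,
increment occurred)`. -/
abbrev RType (Q : Type) := Q × Q × WithBot ℕ × WithBot ℕ × Bool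

variable {Q A : Type}

/-- The type of the non-empty finite run of `M` starting in `q` processing `l`. -/
def runType (M : PACost Q A) (q : Q) (l : List A) : RType Q :=
  let sts := List.scanl M.δ q l
  let st : ℕ → Q := fun j => sts.getD j q
  ( q,
    l.foldl M.δ q,
    ((Finset.range sts.length).filter fun j => Even (M.Ω (st j))).sup
      (fun j => (M.Ω (st j) : WithBot ℕ)),
    ((Finset.range sts.length).filter fun j =>
        Odd (M.Ω (st j)) ∧ ∀ j' < sts.length, j < j' →
          ¬(Even (M.Ω (st j')) ∧ M.Ω (st j) < M.Ω (st j'))).sup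
      (fun j => (M.Ω (st j) : WithBot ℕ)),
    (sts.zip l).any fun p => M.Cst p.1 p.2 )

/-- The type of the empty run prefix starting in `q`. -/
def InitT (M : PACost Q A) (q : Q) : RType Q :=
  ( q, q,
    if Even (M.Ω q) then (M.Ω q : WithBot ℕ) else ⊥,
    if Odd (M.Ω q) then (M.Ω q : WithBot ℕ) else ⊥,
    false )

/-- The type-update function. -/
def UpdT (M : PACost Q A) (t : RType Q) (a : A) : RType Q :=
  match t with
  | (q0, q1, c0, c1, ℓ) =>
    let q1' := M.δ q1 a
    ( q0, q1',
      if Even (M.Ω q1') then max c0 ((M.Ω q1' : WithBot ℕ)) else c0,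
      if Odd (M.Ω q1') then max c1 ((M.Ω q1' : WithBot ℕ))
      else if ∃ c : ℕ, c1 = (c : WithBot ℕ) ∧ M.Ω q1' ∈ M.Ans c then ⊥
      else c1,
      ℓ || M.Cst q1 a )

end PACost

/-! ### Auxiliary lemmas -/

namespace PACost

variable {Q A : Type} (M : PACost Q A) (q0 : Q) (w : ℕ → A)

lemma stateAt_succ' (n : ℕ) :
    M.stateAt q0 w (n + 1) = M.δ (M.stateAt q0 w n) (w n) := rfl

lemma map_range_shift {β : Type} (g : ℕ → β) (k m : ℕ) :
    (List.range (k + 1)).map (fun i => g (m + i)) =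
      g m :: ((List.range k).map fun i => g ((m + 1) + i)) := by
  rw [List.range_succ_eq_map, List.map_cons, List.map_map]
  have hf : ((fun i => g (m + i)) ∘ Nat.succ) = fun i => g (m + 1 + i) := by
    funext i
    simp only [Function.comp_apply]
    congr 1
    omega
  rw [hf]
  simp

lemma scanl_seg (k m : ℕ) :
    List.scanl M.δ (M.stateAt q0 w m) ((List.range k).map fun i => w (m + i)) =
      (List.range (k + 1)).map fun i => M.stateAt q0 w (m + i) := by
  induction k generalizing m with
  | zero => simp [List.range_succ]
  | succ k ih =>
    rw [map_range_shift w k m, map_range_shift (fun i => M.stateAt q0 w i) (k + 1) m,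
      List.scanl_cons, ← stateAt_succ', ih (m + 1)]

lemma foldl_seg (k m : ℕ) :
    ((List.range k).map fun i => w (m + i)).foldl M.δ (M.stateAt q0 w m) =
      M.stateAt q0 w (m + k) := by
  induction k generalizing m with
  | zero => simp
  | succ k ih =>
    rw [map_range_shift w k m, List.foldl_cons, ← stateAt_succ', ih (m + 1)]
    congr 1
    omega

/-- Index form of the `c0` component of the type of a block. -/
def bC0 (m k : ℕ) : WithBot ℕ :=
  ((Finset.range (k + 1)).filter fun j => Even (M.Ω (M.stateAt q0 w (m + j)))).sup
    fun j => (M.Ω (M.stateAt q0 w (m + j)) : WithBot ℕ)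

/-- Index form of the `c1` component of the type of a block. -/
def bC1 (m k : ℕ) : WithBot ℕ :=
  ((Finset.range (k + 1)).filter fun j =>
      Odd (M.Ω (M.stateAt q0 w (m + j))) ∧ ∀ j' < k + 1, j < j' →
        ¬(Even (M.Ω (M.stateAt q0 w (m + j'))) ∧
          M.Ω (M.stateAt q0 w (m + j)) < M.Ω (M.stateAt q0 w (m + j')))).sup
    fun j => (M.Ω (M.stateAt q0 w (m + j)) : WithBot ℕ)

lemma segCost_le (m n : ℕ) : M.segCost q0 w m n ≤ n - m :=
  le_trans (Finset.card_filter_le _ _) (by simp [Nat.card_Ico])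

lemma segCost_add {m n p : ℕ} (h1 : m ≤ n) (h2 : n ≤ p) :
    M.segCost q0 w m n + M.segCost q0 w n p = M.segCost q0 w m p := by
  unfold segCost
  rw [← Finset.card_union_of_disjoint
    (Finset.disjoint_filter_filter (Finset.Ico_disjoint_Ico_consecutive m n p)),
    ← Finset.filter_union, Finset.Ico_union_Ico_eq_Ico h1 h2]

lemma segCost_mono {m m' n n' : ℕ} (h1 : m' ≤ m) (h2 : n ≤ n') :
    M.segCost q0 w m n ≤ M.segCost q0 w m' n' :=
  Finset.card_le_card (Finset.filter_subset_filter _ (Finset.Ico_subset_Ico h1 h2))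

lemma segCost_blocks (φ : ℕ → ℕ) (hφ : Monotone φ) (a b : ℕ) (hab : a ≤ b) :
    M.segCost q0 w (φ a) (φ b) = ∑ i ∈ Finset.Ico a b, M.segCost q0 w (φ i) (φ (i + 1)) := by
  induction b, hab using Nat.le_induction with
  | base => simp [segCost]
  | succ b hab ih =>
    rw [Finset.sum_Ico_succ_top hab, ← ih,
      segCost_add M q0 w (hφ hab) (hφ (Nat.le_succ b))]

lemma segCost_pos_iff (m k : ℕ) :
    0 < M.segCost q0 w m (m + k) ↔
      ∃ i < k, M.Cst (M.stateAt q0 w (m + i)) (w (m + i)) = true := by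
  unfold segCost
  rw [Finset.card_pos]
  constructor
  · rintro ⟨p, hp⟩
    rw [Finset.mem_filter, Finset.mem_Ico] at hp
    refine ⟨p - m, by omega, ?_⟩
    rw [show m + (p - m) = p by omega]
    exact hp.2
  · rintro ⟨i, hi, hCst⟩
    exact ⟨m + i, Finset.mem_filter.mpr ⟨Finset.mem_Ico.mpr ⟨by omega, by omega⟩, hCst⟩⟩

lemma getD_map_range {β : Type} (g : ℕ → β) (k j : ℕ) (hj : j < k + 1) (q : β) :
    ((List.range (k + 1)).map g).getD j q = g j := by
  rw [List.getD_eq_getElem?_getD, List.getElem?_map, List.getElem?_range hj]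
  rfl

lemma runType_seg {m n : ℕ} (h : m ≤ n) :
    M.runType (M.stateAt q0 w m) (seg w m n) =
      (M.stateAt q0 w m, M.stateAt q0 w n,
        bC0 M q0 w m (n - m), bC1 M q0 w m (n - m),
        decide (0 < M.segCost q0 w m n)) := by
  obtain ⟨k, rfl⟩ : ∃ k, n = m + k := ⟨n - m, by omega⟩
  have hseg : seg w m (m + k) = (List.range k).map fun i => w (m + i) := by
    simp [seg]
  have hscan := scanl_seg M q0 w k m
  have hnm : m + k - m = k := by omega
  rw [hnm]
  simp only [runType, hseg, hscan]
  have hlen : ((List.range (k + 1)).map fun i => M.stateAt q0 w (m + i)).length = k + 1 := by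
    simp
  have hst : ∀ j < k + 1,
      ((List.range (k + 1)).map fun i => M.stateAt q0 w (m + i)).getD j (M.stateAt q0 w m)
        = M.stateAt q0 w (m + j) := fun j hj => getD_map_range _ k j hj _
  simp only [Prod.mk.injEq, hlen]
  refine ⟨trivial, ?_, ?_, ?_, ?_⟩
  · exact foldl_seg M q0 w k m
  · unfold bC0
    refine Finset.sup_congr ?_ ?_
    · refine Finset.filter_congr ?_
      intro j hj
      rw [hst j (Finset.mem_range.mp hj)]
    · intro j hj
      have hjr : j < k + 1 := Finset.mem_range.mp (Finset.filter_subset _ _ hj)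
      rw [hst j hjr]
  · unfold bC1
    refine Finset.sup_congr ?_ ?_
    · refine Finset.filter_congr ?_
      intro j hj
      have hjr : j < k + 1 := Finset.mem_range.mp hj
      rw [hst j hjr]
      constructor
      · rintro ⟨h1, h2⟩
        refine ⟨h1, fun j' hj' hjj' => ?_⟩
        have := h2 j' hj' hjj'
        rwa [hst j' hj'] at this
      · rintro ⟨h1, h2⟩
        refine ⟨h1, fun j' hj' hjj' => ?_⟩
        rw [hst j' hj']
        exact h2 j' hj' hjj'
    · intro j hj
      have hjr : j < k + 1 := Finset.mem_range.mp (Finset.filter_subset _ _ hj)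
      rw [hst j hjr]
  · rw [Bool.eq_iff_iff, List.any_eq_true, decide_eq_true_eq, segCost_pos_iff M q0 w m k]
    constructor
    · rintro ⟨x, hx, hCst⟩
      obtain ⟨i, hi, hxi⟩ := List.mem_iff_getElem.mp hx
      have hilt : i < k := by
        have := hi
        rw [List.length_zip, hlen, List.length_map, List.length_range] at this
        omega
      refine ⟨i, hilt, ?_⟩
      have hx1 : x.1 = M.stateAt q0 w (m + i) := by
        rw [← hxi, List.getElem_zip]
        simp
      have hx2 : x.2 = w (m + i) := by
        rw [← hxi, List.getElem_zip]
        simp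
      rwa [hx1, hx2] at hCst
    · rintro ⟨i, hi, hCst⟩
      refine ⟨(M.stateAt q0 w (m + i), w (m + i)), ?_, hCst⟩
      apply List.mem_iff_getElem.mpr
      refine ⟨i, ?_, ?_⟩
      · rw [List.length_zip, hlen, List.length_map, List.length_range]
        omega
      · rw [List.getElem_zip]
        simp

lemma Cor_le_of {n : ℕ} (hodd : ¬ Even (M.Ω (M.stateAt q0 w n))) (p : ℕ) (hp : n < p)
    (he : Even (M.Ω (M.stateAt q0 w p)))
    (hlt : M.Ω (M.stateAt q0 w n) < M.Ω (M.stateAt q0 w p)) :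
    M.Cor q0 w n ≤ (M.segCost q0 w n p : ℕ∞) := by
  rw [Cor, if_neg hodd]
  exact sInf_le ⟨p, hp, ⟨⟨_, rfl⟩, hlt, he⟩, rfl⟩

lemma exists_answer_of_Cor_le {n : ℕ} (b : ℕ)
    (hodd : ¬ Even (M.Ω (M.stateAt q0 w n))) (h : M.Cor q0 w n ≤ (b : ℕ∞)) :
    ∃ p, n < p ∧ Even (M.Ω (M.stateAt q0 w p)) ∧
      M.Ω (M.stateAt q0 w n) < M.Ω (M.stateAt q0 w p) ∧ M.segCost q0 w n p ≤ b := by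
  rw [Cor, if_neg hodd] at h
  have hlt : sInf { c : ℕ∞ | ∃ n', n < n' ∧
      M.Ω (M.stateAt q0 w n') ∈ M.Ans (M.Ω (M.stateAt q0 w n)) ∧
      c = (M.segCost q0 w n n' : ℕ∞) } < ((b + 1 : ℕ) : ℕ∞) :=
    lt_of_le_of_lt h (by exact_mod_cast Nat.lt_succ_self b)
  obtain ⟨a, ha, hab⟩ := sInf_lt_iff.mp hlt
  obtain ⟨p, hp, hans, rfl⟩ := ha
  obtain ⟨-, hltc, hev⟩ := hans
  refine ⟨p, hp, hev, hltc, ?_⟩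
  have : M.segCost q0 w n p < b + 1 := by exact_mod_cast hab
  omega

end PACost

lemma exists_block (φ : ℕ → ℕ) (hφ : StrictMono φ) (h0 : φ 0 = 0) (n : ℕ) :
    ∃ j, φ j ≤ n ∧ n < φ (j + 1) := by
  have hub : ∃ j, n < φ j := ⟨n + 1, lt_of_lt_of_le (Nat.lt_succ_self n) hφ.le_apply⟩
  classical
  have hJ : n < φ (Nat.find hub) := Nat.find_spec hub
  have hJ0 : Nat.find hub ≠ 0 := by
    intro h
    rw [h, h0] at hJ
    omega
  refine ⟨Nat.find hub - 1, ?_, ?_⟩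
  · have := Nat.find_min hub (m := Nat.find hub - 1) (by omega)
    omega
  · rw [show Nat.find hub - 1 + 1 = Nat.find hub by omega]
    exact hJ

lemma limsup_le_nat_of {f : ℕ → ℕ∞} {b : ℕ}
    (h : Filter.limsup f Filter.atTop ≤ (b : ℕ∞)) : ∀ᶠ n in Filter.atTop, f n ≤ b := by
  have := Filter.eventually_lt_of_limsup_lt
    (lt_of_le_of_lt h (by exact_mod_cast Nat.lt_succ_self b) :
      Filter.limsup f Filter.atTop < ((b + 1 : ℕ) : ℕ∞))
  filter_upwards [this] with n hn
  have hne : f n ≠ ⊤ := (lt_of_lt_of_le hn le_top).ne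
  lift f n to ℕ using hne with x
  have : x < b + 1 := by exact_mod_cast hn
  exact_mod_cast Nat.lt_succ_iff.mp this

/-- run replacement lemma. The run `ρ'` of `M` on `w1` from `q1` is cut by
`φ1` into the non-empty finite runs `ρ_j^1`, and the run `ρ''` of `M` on `w2` from `q2` is cut
by `φ2` into the non-empty finite runs `ρ_j^2`; corresponding pieces have the same type, and
`sup_j |ρ_j^2| = d`. If `limsup_n Cor(ρ', n) ≤ b` then `limsup_n Cor(ρ'', n) ≤ (b+2)·d`;
in particular, if `ρ'` is accepting then so is `ρ''`. -/
theorem statement0 {Q A : Type} [Fintype Q] [Fintype A] (M : PACost Q A)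
    (q1 q2 : Q) (w1 w2 : ℕ → A) (φ1 φ2 : ℕ → ℕ)
    (hmono1 : StrictMono φ1) (hmono2 : StrictMono φ2)
    (h01 : φ1 0 = 0) (h02 : φ2 0 = 0)
    (htype : ∀ j, M.runType (M.stateAt q1 w1 (φ1 j)) (seg w1 (φ1 j) (φ1 (j + 1)))
               = M.runType (M.stateAt q2 w2 (φ2 j)) (seg w2 (φ2 j) (φ2 (j + 1))))
    (d : ℕ) (hd : IsLUB (Set.range fun j => φ2 (j + 1) - φ2 j) d) :
    (∀ b : ℕ, Filter.limsup (fun n => M.Cor q1 w1 n) Filter.atTop ≤ (b : ℕ∞) →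
        Filter.limsup (fun n => M.Cor q2 w2 n) Filter.atTop ≤ (((b + 2) * d : ℕ) : ℕ∞)) ∧
    (M.Accepting q1 w1 → M.Accepting q2 w2) := by
  classical
  have hT : ∀ j,
      PACost.bC0 M q1 w1 (φ1 j) (φ1 (j+1) - φ1 j) = PACost.bC0 M q2 w2 (φ2 j) (φ2 (j+1) - φ2 j) ∧
      PACost.bC1 M q1 w1 (φ1 j) (φ1 (j+1) - φ1 j) = PACost.bC1 M q2 w2 (φ2 j) (φ2 (j+1) - φ2 j) ∧
      (0 < M.segCost q1 w1 (φ1 j) (φ1 (j+1)) ↔ 0 < M.segCost q2 w2 (φ2 j) (φ2 (j+1))) := by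
    intro j
    have h := htype j
    rw [PACost.runType_seg M q1 w1 (hmono1 (show j < j + 1 by omega)).le,
        PACost.runType_seg M q2 w2 (hmono2 (show j < j + 1 by omega)).le] at h
    simp only [Prod.mk.injEq] at h
    exact ⟨h.2.2.1, h.2.2.2.1, decide_eq_decide.mp h.2.2.2.2⟩
  have hdub : ∀ j, φ2 (j+1) - φ2 j ≤ d := fun j => hd.1 ⟨j, rfl⟩
  have key : ∀ b : ℕ, Filter.limsup (fun n => M.Cor q1 w1 n) Filter.atTop ≤ (b : ℕ∞) →
      Filter.limsup (fun n => M.Cor q2 w2 n) Filter.atTop ≤ (((b + 2) * d : ℕ) : ℕ∞) := by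
    intro b hb
    obtain ⟨N, hN⟩ := Filter.eventually_atTop.mp (limsup_le_nat_of hb)
    refine Filter.limsup_le_of_le (by isBoundedDefault) ?_
    rw [Filter.eventually_atTop]
    refine ⟨φ2 N, fun n hn => ?_⟩
    obtain ⟨j, hjn1, hjn2⟩ := exists_block φ2 hmono2 h02 n
    have hNj : N ≤ j := by
      by_contra hcon
      push_neg at hcon
      have := hmono2.monotone (show j + 1 ≤ N by omega)
      omega
    by_cases hevn : Even (M.Ω (M.stateAt q2 w2 n))
    · rw [PACost.Cor, if_pos hevn]
      exact zero_le
    have hble : ∀ p, n < p → p ≤ φ2 (j+1) → M.segCost q2 w2 n p ≤ (b+2)*d := by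
      intro p h1 h2
      have h3 := PACost.segCost_le M q2 w2 n p
      have h4 := hdub j
      have h5 : d ≤ (b+2)*d := Nat.le_mul_of_pos_left d (by omega)
      omega
    by_cases hA : ∃ p, n < p ∧ p ≤ φ2 (j+1) ∧ Even (M.Ω (M.stateAt q2 w2 p)) ∧
        M.Ω (M.stateAt q2 w2 n) < M.Ω (M.stateAt q2 w2 p)
    · obtain ⟨p, hp1, hp2, hp3, hp4⟩ := hA
      refine le_trans (PACost.Cor_le_of M q2 w2 hevn p hp1 hp3 hp4) ?_
      exact_mod_cast hble p hp1 hp2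
    · push_neg at hA
      have hmem2 : (n - φ2 j) ∈ (Finset.range ((φ2 (j+1) - φ2 j)+1)).filter (fun j0 =>
          Odd (M.Ω (M.stateAt q2 w2 (φ2 j + j0))) ∧ ∀ j' < (φ2 (j+1) - φ2 j)+1, j0 < j' →
            ¬(Even (M.Ω (M.stateAt q2 w2 (φ2 j + j'))) ∧
              M.Ω (M.stateAt q2 w2 (φ2 j + j0)) < M.Ω (M.stateAt q2 w2 (φ2 j + j')))) := by
        rw [Finset.mem_filter, Finset.mem_range]
        have hidx : φ2 j + (n - φ2 j) = n := by omega
        refine ⟨by omega, ?_, ?_⟩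
        · rw [hidx]
          exact Nat.not_even_iff_odd.symm.mpr hevn
        · intro j' hj' hlt
          rw [hidx]
          rintro ⟨he', hlt'⟩
          have h1 : n < φ2 j + j' := by omega
          have h2 : φ2 j + j' ≤ φ2 (j+1) := by omega
          exact absurd hlt' (not_lt.mpr (hA _ h1 h2 he'))
      have hcle : ((M.Ω (M.stateAt q2 w2 n) : ℕ) : WithBot ℕ) ≤
          PACost.bC1 M q2 w2 (φ2 j) (φ2 (j+1) - φ2 j) := by
        have := Finset.le_sup
          (f := fun j0 => (M.Ω (M.stateAt q2 w2 (φ2 j + j0)) : WithBot ℕ)) hmem2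
        beta_reduce at this
        rwa [show φ2 j + (n - φ2 j) = n by omega] at this
      rw [← (hT j).2.1] at hcle
      have hne1 : ((Finset.range ((φ1 (j+1) - φ1 j)+1)).filter fun j0 =>
          Odd (M.Ω (M.stateAt q1 w1 (φ1 j + j0))) ∧ ∀ j' < (φ1 (j+1) - φ1 j)+1, j0 < j' →
            ¬(Even (M.Ω (M.stateAt q1 w1 (φ1 j + j'))) ∧
              M.Ω (M.stateAt q1 w1 (φ1 j + j0)) < M.Ω (M.stateAt q1 w1 (φ1 j + j')))).Nonempty := by
        rw [Finset.nonempty_iff_ne_empty]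
        intro hemp
        have hbot : PACost.bC1 M q1 w1 (φ1 j) (φ1 (j+1) - φ1 j) = ⊥ := by
          rw [PACost.bC1, hemp, Finset.sup_empty]
        rw [hbot] at hcle
        exact absurd hcle (by simp)
      obtain ⟨j1, hj1mem, hsupeq⟩ := Finset.exists_mem_eq_sup _ hne1
        (fun j0 => (M.Ω (M.stateAt q1 w1 (φ1 j + j0)) : WithBot ℕ))
      rw [Finset.mem_filter, Finset.mem_range] at hj1mem
      obtain ⟨hj1r, hj1odd, hj1unans⟩ := hj1mem
      have hcle' : ((M.Ω (M.stateAt q2 w2 n) : ℕ) : WithBot ℕ) ≤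
          ((M.Ω (M.stateAt q1 w1 (φ1 j + j1)) : ℕ) : WithBot ℕ) := by
        rw [PACost.bC1, hsupeq] at hcle
        exact hcle
      have hcc1 : M.Ω (M.stateAt q2 w2 n) ≤ M.Ω (M.stateAt q1 w1 (φ1 j + j1)) := by
        exact_mod_cast hcle'
      have hmN : N ≤ φ1 j + j1 := by
        have h1 : N ≤ φ1 N := hmono1.le_apply
        have h2 : φ1 N ≤ φ1 j := hmono1.monotone hNj
        omega
      have hodd1 : ¬ Even (M.Ω (M.stateAt q1 w1 (φ1 j + j1))) :=
        Nat.not_even_iff_odd.symm.mp hj1odd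
      obtain ⟨n', hn'1, hn'e, hn'lt, hn'cost⟩ :=
        PACost.exists_answer_of_Cor_le M q1 w1 b hodd1 (hN _ hmN)
      have hmub : φ1 j + j1 ≤ φ1 (j+1) := by
        have := hmono1 (show j < j + 1 by omega)
        omega
      have hn'big : φ1 (j+1) < n' := by
        by_contra hcon
        push_neg at hcon
        have hcond := hj1unans (n' - φ1 j) (by omega) (by omega)
        rw [show φ1 j + (n' - φ1 j) = n' by omega] at hcond
        exact hcond ⟨hn'e, hn'lt⟩
      obtain ⟨j', hj'1, hj'2⟩ := exists_block φ1 hmono1 h01 (n' - 1)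
      have hj'low : φ1 j' < n' := by omega
      have hn'le : n' ≤ φ1 (j'+1) := by omega
      have hjj' : j + 1 ≤ j' := by
        have h1 : φ1 (j+1) < φ1 (j'+1) := by omega
        have h2 := hmono1.lt_iff_lt.mp h1
        omega
      have hmem0 : (n' - φ1 j') ∈ (Finset.range ((φ1 (j'+1) - φ1 j')+1)).filter
          (fun j0 => Even (M.Ω (M.stateAt q1 w1 (φ1 j' + j0)))) := by
        rw [Finset.mem_filter, Finset.mem_range, show φ1 j' + (n' - φ1 j') = n' by omega]
        exact ⟨by omega, hn'e⟩
      have h3 : ((M.Ω (M.stateAt q1 w1 n') : ℕ) : WithBot ℕ) ≤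
          PACost.bC0 M q1 w1 (φ1 j') (φ1 (j'+1) - φ1 j') := by
        have := Finset.le_sup
          (f := fun j0 => (M.Ω (M.stateAt q1 w1 (φ1 j' + j0)) : WithBot ℕ)) hmem0
        beta_reduce at this
        rwa [show φ1 j' + (n' - φ1 j') = n' by omega] at this
      rw [(hT j').1] at h3
      have hne2 : ((Finset.range ((φ2 (j'+1) - φ2 j')+1)).filter fun j0 =>
          Even (M.Ω (M.stateAt q2 w2 (φ2 j' + j0)))).Nonempty := by
        rw [Finset.nonempty_iff_ne_empty]
        intro hemp
        have hbot : PACost.bC0 M q2 w2 (φ2 j') (φ2 (j'+1) - φ2 j') = ⊥ := by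
          rw [PACost.bC0, hemp, Finset.sup_empty]
        rw [hbot] at h3
        exact absurd h3 (by simp)
      obtain ⟨i2, hi2mem, hsupeq2⟩ := Finset.exists_mem_eq_sup _ hne2
        (fun j0 => (M.Ω (M.stateAt q2 w2 (φ2 j' + j0)) : WithBot ℕ))
      rw [Finset.mem_filter, Finset.mem_range] at hi2mem
      obtain ⟨hi2r, hi2ev⟩ := hi2mem
      have hΩp : M.Ω (M.stateAt q1 w1 n') ≤ M.Ω (M.stateAt q2 w2 (φ2 j' + i2)) := by
        rw [PACost.bC0, hsupeq2] at h3
        exact_mod_cast h3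
      have hclt : M.Ω (M.stateAt q2 w2 n) < M.Ω (M.stateAt q2 w2 (φ2 j' + i2)) := by omega
      have hpub : φ2 j' + i2 ≤ φ2 (j'+1) := by
        have := hmono2 (show j' < j' + 1 by omega)
        omega
      have hpn : n < φ2 j' + i2 := by
        have h1 : φ2 (j+1) ≤ φ2 j' := hmono2.monotone hjj'
        omega
      have hcost : M.segCost q2 w2 n (φ2 j' + i2) ≤ (b+2)*d := by
        have hstep : M.segCost q2 w2 n (φ2 j' + i2) ≤
            M.segCost q2 w2 n (φ2 (j+1)) + M.segCost q2 w2 (φ2 (j+1)) (φ2 (j'+1)) := by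
          rw [PACost.segCost_add M q2 w2 (le_of_lt hjn2) (hmono2.monotone (by omega))]
          exact PACost.segCost_mono M q2 w2 le_rfl hpub
        have hpart1 : M.segCost q2 w2 n (φ2 (j+1)) ≤ d := by
          have h1 := PACost.segCost_le M q2 w2 n (φ2 (j+1))
          have h2 := hdub j
          omega
        have hblocks : M.segCost q2 w2 (φ2 (j+1)) (φ2 (j'+1)) =
            (∑ i ∈ Finset.Ico (j+1) j', M.segCost q2 w2 (φ2 i) (φ2 (i+1))) +
              M.segCost q2 w2 (φ2 j') (φ2 (j'+1)) := by
          rw [PACost.segCost_blocks M q2 w2 φ2 hmono2.monotone (j+1) (j'+1) (by omega),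
            Finset.sum_Ico_succ_top (by omega : j+1 ≤ j')]
        have hlast : M.segCost q2 w2 (φ2 j') (φ2 (j'+1)) ≤ d := by
          have h1 := PACost.segCost_le M q2 w2 (φ2 j') (φ2 (j'+1))
          have h2 := hdub j'
          omega
        have hmid : (∑ i ∈ Finset.Ico (j+1) j', M.segCost q2 w2 (φ2 i) (φ2 (i+1))) ≤ b * d := by
          have e1 : (∑ i ∈ Finset.Ico (j+1) j', M.segCost q2 w2 (φ2 i) (φ2 (i+1))) =
              ∑ i ∈ (Finset.Ico (j+1) j').filter
                  (fun i => M.segCost q2 w2 (φ2 i) (φ2 (i+1)) ≠ 0),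
                M.segCost q2 w2 (φ2 i) (φ2 (i+1)) := by
            rw [Finset.sum_filter_ne_zero]
          have e2 : (Finset.Ico (j+1) j').filter
                (fun i => M.segCost q2 w2 (φ2 i) (φ2 (i+1)) ≠ 0) =
              (Finset.Ico (j+1) j').filter
                (fun i => M.segCost q1 w1 (φ1 i) (φ1 (i+1)) ≠ 0) := by
            apply Finset.filter_congr
            intro i _
            have h1 := (hT i).2.2
            constructor <;> intro h2 <;> omega
          have e3 : ((Finset.Ico (j+1) j').filter
              (fun i => M.segCost q1 w1 (φ1 i) (φ1 (i+1)) ≠ 0)).card ≤ b := by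
            calc ((Finset.Ico (j+1) j').filter
                  (fun i => M.segCost q1 w1 (φ1 i) (φ1 (i+1)) ≠ 0)).card
                = ∑ i ∈ (Finset.Ico (j+1) j').filter
                    (fun i => M.segCost q1 w1 (φ1 i) (φ1 (i+1)) ≠ 0), 1 := by
                  rw [Finset.card_eq_sum_ones]
              _ ≤ ∑ i ∈ (Finset.Ico (j+1) j').filter
                    (fun i => M.segCost q1 w1 (φ1 i) (φ1 (i+1)) ≠ 0),
                    M.segCost q1 w1 (φ1 i) (φ1 (i+1)) := by
                  apply Finset.sum_le_sum
                  intro i hi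
                  have := (Finset.mem_filter.mp hi).2
                  omega
              _ ≤ ∑ i ∈ Finset.Ico (j+1) j', M.segCost q1 w1 (φ1 i) (φ1 (i+1)) :=
                  Finset.sum_le_sum_of_subset (Finset.filter_subset _ _)
              _ = M.segCost q1 w1 (φ1 (j+1)) (φ1 j') :=
                  (PACost.segCost_blocks M q1 w1 φ1 hmono1.monotone (j+1) j' (by omega)).symm
              _ ≤ M.segCost q1 w1 (φ1 j + j1) n' :=
                  PACost.segCost_mono M q1 w1 hmub (le_of_lt hj'low)
              _ ≤ b := hn'cost
          calc (∑ i ∈ Finset.Ico (j+1) j', M.segCost q2 w2 (φ2 i) (φ2 (i+1)))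
              = ∑ i ∈ (Finset.Ico (j+1) j').filter
                  (fun i => M.segCost q2 w2 (φ2 i) (φ2 (i+1)) ≠ 0),
                M.segCost q2 w2 (φ2 i) (φ2 (i+1)) := e1
            _ ≤ ((Finset.Ico (j+1) j').filter
                  (fun i => M.segCost q2 w2 (φ2 i) (φ2 (i+1)) ≠ 0)).card • d := by
                apply Finset.sum_le_card_nsmul
                intro i _
                have h1 := PACost.segCost_le M q2 w2 (φ2 i) (φ2 (i+1))
                have h2 := hdub i
                omega
            _ = ((Finset.Ico (j+1) j').filter
                  (fun i => M.segCost q2 w2 (φ2 i) (φ2 (i+1)) ≠ 0)).card * d := by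
                rw [smul_eq_mul]
            _ ≤ b * d := by
                rw [e2]
                exact Nat.mul_le_mul_right d e3
        have hring : (b+2)*d = d + (b*d + d) := by ring
        omega
      refine le_trans (PACost.Cor_le_of M q2 w2 hevn _ hpn hi2ev hclt) ?_
      exact_mod_cast hcost
  refine ⟨key, fun hacc => ?_⟩
  have hne : Filter.limsup (fun n => M.Cor q1 w1 n) Filter.atTop ≠ ⊤ := hacc.ne
  obtain ⟨b, hb⟩ := WithTop.ne_top_iff_exists.mp hne
  have hfin := key b (le_of_eq hb.symm)
  show Filter.limsup (fun n => M.Cor q2 w2 n) Filter.atTop < ⊤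
  exact lt_of_le_of_lt hfin (by
    rw [lt_top_iff_ne_top]
    exact_mod_cast WithTop.coe_ne_top)
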